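/- (Lemma 2, identification of the local average structural function.) Suppose in addition that W = g(X,E) is μ-integrable. Then μ'-almost surely, the conditional expectation of W given the σ-algebra generated by (X,Z,U) under the worker subpopulation measure μ' is given by the LASF evaluated at (X,U): μ'[W | σ(X,Z,U)](ω) = ∫ g(X ω, e) d(condDistrib E U μ (U ω))(e) for μ'-a.e. ω. In particular the LASF μ(x,v) = E[g(x,E) | U = v] is identified from the distribution of observables on {H>0}. -/

import Mathlib

open MeasureTheory ProbabilityTheory

set_option maxHeartbeats 1000000 in
/-- Lemma 2 (identification of the LASF): if `W = g(X,E)` is μ-integrable, then in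
the worker subpopulation (`H > 0`) the conditional expectation of `W` given
`σ(X,Z,U)` equals the local average structural function evaluated at `(X,U)`. -/
theorem LASF_identification
    {Ω : Type*} [MeasurableSpace Ω] [StandardBorelSpace Ω] [Nonempty Ω]
    (μ : Measure Ω) [IsProbabilityMeasure μ]
    {dx dz de : ℕ}
    (X : Ω → (Fin dx → ℝ)) (Z : Ω → (Fin dz → ℝ)) (E : Ω → (Fin de → ℝ)) (U : Ω → ℝ)
    (hX : Measurable X) (hZ : Measurable Z) (hE : Measurable E) (hU : Measurable U)
    (hindep : IndepFun (fun ω => (X ω, Z ω)) (fun ω => (E ω, U ω)) μ)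
    (hUnif : μ.map U = volume.restrict (Set.Icc (0 : ℝ) 1))
    (k : (Fin dx → ℝ) → (Fin dz → ℝ) → ℝ → ℝ)
    (hk : Measurable fun p : (Fin dx → ℝ) × (Fin dz → ℝ) × ℝ => k p.1 p.2.1 p.2.2)
    (hkmono : ∀ x z, StrictMono (k x z))
    (H : Ω → ℝ) (hH : H = fun ω => max (k (X ω) (Z ω) (U ω)) 0)
    (hpos : μ {ω | 0 < H ω} ≠ 0)
    (g : (Fin dx → ℝ) → (Fin de → ℝ) → ℝ)
    (hg : Measurable fun p : (Fin dx → ℝ) × (Fin de → ℝ) => g p.1 p.2)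
    (W : Ω → ℝ) (hW : W = fun ω => g (X ω) (E ω))
    (hint : Integrable W μ) :
    (μ[|{ω | 0 < H ω}])[W |
        MeasurableSpace.comap (fun ω => (X ω, Z ω, U ω)) inferInstance]
      =ᵐ[μ[|{ω | 0 < H ω}]]
    fun ω => ∫ e, g (X ω) e ∂(condDistrib E U μ (U ω)) := by
  rename_i m0 _hsb _hne _hpm
  subst hW
  set T : Ω → (Fin dx → ℝ) × (Fin dz → ℝ) × ℝ := fun ω => (X ω, Z ω, U ω) with hT_def
  have hT : Measurable T := hX.prodMk (hZ.prodMk hU)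
  have hTE : Measurable fun ω => (T ω, E ω) := hT.prodMk hE
  have hS : Measurable fun ω => (X ω, Z ω) := hX.prodMk hZ
  have hη : Measurable fun ω => (U ω, E ω) := hU.prodMk hE
  set ν : Kernel ℝ (Fin de → ℝ) := condDistrib E U μ with hν_def
  have hsnd : Measurable fun t : (Fin dx → ℝ) × (Fin dz → ℝ) × ℝ => t.2.2 :=
    measurable_snd.snd
  set κ : Kernel ((Fin dx → ℝ) × (Fin dz → ℝ) × ℝ) (Fin de → ℝ) :=
    ν.comap (fun t => t.2.2) hsnd with hκ_def
  haveI : IsProbabilityMeasure (μ.map T) := Measure.isProbabilityMeasure_map hT.aemeasurable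
  haveI : IsProbabilityMeasure (μ.map fun ω => (X ω, Z ω)) :=
    Measure.isProbabilityMeasure_map hS.aemeasurable
  haveI : IsProbabilityMeasure (μ.map U) := Measure.isProbabilityMeasure_map hU.aemeasurable
  -- independence consequences
  have hindep1 : IndepFun (fun ω => (X ω, Z ω)) (fun ω => (U ω, E ω)) μ :=
    hindep.comp measurable_id measurable_swap
  have hindep2 : IndepFun (fun ω => (X ω, Z ω)) U μ :=
    hindep.comp measurable_id measurable_snd
  have h1 : μ.map (fun ω => ((X ω, Z ω), (U ω, E ω)))
      = (μ.map fun ω => (X ω, Z ω)).prod (μ.map fun ω => (U ω, E ω)) :=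
    (indepFun_iff_map_prod_eq_prod_map_map hS.aemeasurable hη.aemeasurable).mp hindep1
  have h1' : μ.map (fun ω => ((X ω, Z ω), U ω))
      = (μ.map fun ω => (X ω, Z ω)).prod (μ.map U) :=
    (indepFun_iff_map_prod_eq_prod_map_map hS.aemeasurable hU.aemeasurable).mp hindep2
  have h2 : μ.map (fun ω => (U ω, E ω)) = (μ.map U) ⊗ₘ ν := by
    rw [hν_def, condDistrib_def, ← Measure.fst_map_prodMk (X := U) hE,
      Measure.disintegrate]
  -- the disintegration of (T, E) by the kernel κ
  have hM : μ.map (fun ω => (T ω, E ω)) = (μ.map T) ⊗ₘ κ := by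
    ext s hs
    have hψ : Measurable (fun p : ((Fin dx → ℝ) × (Fin dz → ℝ)) × (ℝ × (Fin de → ℝ)) =>
        ((p.1.1, p.1.2, p.2.1), p.2.2)) :=
      ((measurable_fst.fst.prodMk (measurable_fst.snd.prodMk measurable_snd.fst)).prodMk
        measurable_snd.snd)
    have hψs := hψ hs
    have hκs : Measurable fun t : (Fin dx → ℝ) × (Fin dz → ℝ) × ℝ =>
        κ t (Prod.mk t ⁻¹' s) := Kernel.measurable_kernel_prodMk_left hs
    have hψ₂ : Measurable (fun q : ((Fin dx → ℝ) × (Fin dz → ℝ)) × ℝ =>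
        ((q.1.1, q.1.2, q.2) : (Fin dx → ℝ) × (Fin dz → ℝ) × ℝ)) :=
      measurable_fst.fst.prodMk (measurable_fst.snd.prodMk measurable_snd)
    have hG : Measurable fun q : ((Fin dx → ℝ) × (Fin dz → ℝ)) × ℝ =>
        κ (q.1.1, q.1.2, q.2) (Prod.mk ((q.1.1, q.1.2, q.2) :
          (Fin dx → ℝ) × (Fin dz → ℝ) × ℝ) ⁻¹' s) := hκs.comp hψ₂
    calc (μ.map fun ω => (T ω, E ω)) s
        = (μ.map fun ω => ((X ω, Z ω), (U ω, E ω)))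
            ((fun p : ((Fin dx → ℝ) × (Fin dz → ℝ)) × (ℝ × (Fin de → ℝ)) =>
              ((p.1.1, p.1.2, p.2.1), p.2.2)) ⁻¹' s) := by
          rw [Measure.map_apply hTE hs, Measure.map_apply (hS.prodMk hη) hψs]
          rfl
      _ = ∫⁻ x, ((μ.map U) ⊗ₘ ν)
            (Prod.mk x ⁻¹' ((fun p : ((Fin dx → ℝ) × (Fin dz → ℝ)) × (ℝ × (Fin de → ℝ)) =>
              ((p.1.1, p.1.2, p.2.1), p.2.2)) ⁻¹' s)) ∂(μ.map fun ω => (X ω, Z ω)) := by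
          rw [h1, h2, Measure.prod_apply hψs]
      _ = ∫⁻ x, ∫⁻ u, κ (x.1, x.2, u) (Prod.mk ((x.1, x.2, u) :
            (Fin dx → ℝ) × (Fin dz → ℝ) × ℝ) ⁻¹' s) ∂(μ.map U)
            ∂(μ.map fun ω => (X ω, Z ω)) := by
          refine lintegral_congr fun x => ?_
          rw [Measure.compProd_apply (measurable_prodMk_left hψs)]
          rfl
      _ = ∫⁻ q, κ (q.1.1, q.1.2, q.2) (Prod.mk ((q.1.1, q.1.2, q.2) :
            (Fin dx → ℝ) × (Fin dz → ℝ) × ℝ) ⁻¹' s)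
            ∂((μ.map fun ω => (X ω, Z ω)).prod (μ.map U)) := by
          rw [lintegral_prod _ hG.aemeasurable]
      _ = ∫⁻ q, κ (q.1.1, q.1.2, q.2) (Prod.mk ((q.1.1, q.1.2, q.2) :
            (Fin dx → ℝ) × (Fin dz → ℝ) × ℝ) ⁻¹' s)
            ∂(μ.map fun ω => ((X ω, Z ω), U ω)) := by rw [h1']
      _ = ∫⁻ ω, κ (T ω) (Prod.mk (T ω) ⁻¹' s) ∂μ := by
          rw [lintegral_map hG (hS.prodMk hU)]
      _ = ∫⁻ t, κ t (Prod.mk t ⁻¹' s) ∂(μ.map T) := (lintegral_map hκs hT).symm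
      _ = ((μ.map T) ⊗ₘ κ) s := (Measure.compProd_apply hs).symm
  -- the candidate conditional expectation
  set f : ((Fin dx → ℝ) × (Fin dz → ℝ) × ℝ) × (Fin de → ℝ) → ℝ := fun p => g p.1.1 p.2
    with hf_def
  have hf_meas : Measurable f := hg.comp (measurable_fst.fst.prodMk measurable_snd)
  have hfi : Integrable f (μ.map fun ω => (T ω, E ω)) := by
    rw [integrable_map_measure hf_meas.aestronglyMeasurable hTE.aemeasurable]
    exact hint
  have hfi' : Integrable f ((μ.map T) ⊗ₘ κ) := hM ▸ hfi
  set φ : (Fin dx → ℝ) × (Fin dz → ℝ) × ℝ → ℝ := fun t => ∫ e, g t.1 e ∂ν t.2.2 with hφ_def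
  have hφsm : StronglyMeasurable φ := by
    have h := hf_meas.stronglyMeasurable.integral_kernel_prod_right' (κ := κ)
    exact h
  have hφint : Integrable φ (μ.map T) := by
    have h := (Measure.integrable_compProd_iff hfi'.aestronglyMeasurable).mp hfi'
    refine h.2.mono' hφsm.aestronglyMeasurable
      (Filter.Eventually.of_forall fun t => ?_)
    exact norm_integral_le_integral_norm (μ := κ t) fun e => f (t, e)
  have hFint : Integrable (fun ω => φ (T ω)) μ :=
    (integrable_map_measure hφsm.aestronglyMeasurable hT.aemeasurable).mp hφint
  -- key set-integral identity under μ
  have key : ∀ A : Set ((Fin dx → ℝ) × (Fin dz → ℝ) × ℝ), MeasurableSet A →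
      ∫ ω in T ⁻¹' A, g (X ω) (E ω) ∂μ = ∫ ω in T ⁻¹' A, φ (T ω) ∂μ := by
    intro A hA
    have hset : (fun ω => (T ω, E ω)) ⁻¹' (A ×ˢ Set.univ) = T ⁻¹' A := by
      ext ω; simp
    calc ∫ ω in T ⁻¹' A, g (X ω) (E ω) ∂μ
        = ∫ p in A ×ˢ Set.univ, f p ∂(μ.map fun ω => (T ω, E ω)) := by
          rw [setIntegral_map (hA.prod MeasurableSet.univ) hf_meas.aestronglyMeasurable
            hTE.aemeasurable, hset]
      _ = ∫ p in A ×ˢ Set.univ, f p ∂((μ.map T) ⊗ₘ κ) := by rw [hM]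
      _ = ∫ t in A, ∫ e in Set.univ, f (t, e) ∂κ t ∂(μ.map T) := by
          rw [Measure.setIntegral_compProd hA MeasurableSet.univ hfi'.integrableOn]
      _ = ∫ t in A, φ t ∂(μ.map T) := by
          simp only [Measure.restrict_univ]; rfl
      _ = ∫ ω in T ⁻¹' A, φ (T ω) ∂μ := by
          rw [setIntegral_map hA hφsm.aestronglyMeasurable hT.aemeasurable]
  -- the subpopulation event
  set s₀ : Set Ω := {ω | 0 < H ω} with hs₀_def
  set B : Set ((Fin dx → ℝ) × (Fin dz → ℝ) × ℝ) := {t | 0 < max (k t.1 t.2.1 t.2.2) 0}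
    with hB_def
  have hB : MeasurableSet B := measurableSet_lt measurable_const (hk.max measurable_const)
  have hs₀B : T ⁻¹' B = s₀ := by
    ext ω; simp [hs₀_def, hB_def, hH, hT_def]
  have hs₀meas : MeasurableSet s₀ := hs₀B ▸ hT hB
  have hm : MeasurableSpace.comap T inferInstance ≤ m0 :=
    Measurable.comap_le (hX.prodMk (hZ.prodMk hU))
  haveI : IsProbabilityMeasure (μ[|s₀]) := cond_isProbabilityMeasure hpos
  have hinvne : (μ s₀)⁻¹ ≠ ⊤ := ENNReal.inv_ne_top.mpr hpos
  have hint' : Integrable (fun ω => g (X ω) (E ω)) (μ[|s₀]) := by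
    rw [ProbabilityTheory.cond]
    exact (hint.restrict).smul_measure hinvne
  have hFint' : Integrable (fun ω => φ (T ω)) (μ[|s₀]) := by
    rw [ProbabilityTheory.cond]
    exact (hFint.restrict).smul_measure hinvne
  have hTm : Measurable[MeasurableSpace.comap T inferInstance] T :=
    measurable_iff_comap_le.mpr le_rfl
  have hFsm : AEStronglyMeasurable[MeasurableSpace.comap T inferInstance]
      (fun ω => φ (T ω)) (μ[|s₀]) :=
    (hφsm.comp_measurable hTm).aestronglyMeasurable
  have hseq : ∀ A₀ : Set ((Fin dx → ℝ) × (Fin dz → ℝ) × ℝ), MeasurableSet A₀ →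
      (μ[|s₀]).restrict (T ⁻¹' A₀) = (μ s₀)⁻¹ • μ.restrict (T ⁻¹' (A₀ ∩ B)) := by
    intro A₀ hA₀
    rw [ProbabilityTheory.cond, Measure.restrict_smul,
      Measure.restrict_restrict (hT hA₀)]
    congr 1
    rw [← hs₀B, ← Set.preimage_inter]
  have main : (fun ω => φ (T ω)) =ᵐ[μ[|s₀]]
      (μ[|s₀])[(fun ω => g (X ω) (E ω)) | MeasurableSpace.comap T inferInstance] := by
    refine ae_eq_condExp_of_forall_setIntegral_eq hm hint'
      (fun A hA _ => hFint'.integrableOn) (fun A hA _ => ?_) hFsm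
    rw [MeasurableSpace.measurableSet_comap] at hA
    obtain ⟨A₀, hA₀, rfl⟩ := hA
    rw [hseq A₀ hA₀, integral_smul_measure, integral_smul_measure,
      key (A₀ ∩ B) (hA₀.inter hB)]
  exact main.symm
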